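/- Let H_• be a subproduct system with left shifts S_k and right shifts R_k on Fock space H_ℕ (where R_k ψ := p_{m+1}(ψ ⊗ e_k) for ψ ∈ H_m). Then for A ∈ B(H_m) and m ≤ l, the map ι_{m,l}(A) := p_l(A ⊗ 1_{H^{⊗(l−m)}})p_l equals Σ_{|k|=l−m} R_k A R_k* restricted to H_l, and also equals Σ_{|j|=m=|k|} A_{j,k} S_j S_k* restricted to H_l, where A_{j,k} = ⟨e_j, A e_k⟩. -/

import Mathlib

open scoped Matrix

noncomputable section

/-- Words of length `m` in the alphabet `{1,…,n}`. -/
abbrev Wd (n m : ℕ) := Fin m → Fin n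

/-- The `m`-th full tensor power `H^{⊗m}` of `H = ℂ^n`, realized as the Euclidean
space with orthonormal basis indexed by words of length `m`. -/
abbrev TP (n m : ℕ) : Type := EuclideanSpace ℂ (Wd n m)

variable {n : ℕ}

/-- Continuous linear map associated to a (possibly rectangular) matrix. -/
def ofMatR {ι κ : Type} [Fintype ι] [Fintype κ] [DecidableEq ι] [DecidableEq κ]
    (M : Matrix ι κ ℂ) : EuclideanSpace ℂ κ →L[ℂ] EuclideanSpace ℂ ι :=
  LinearMap.toContinuousLinearMap (Matrix.toEuclideanLin M)

/-- Matrix entry of an operator in the standard basis. -/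
def ent {a : ℕ} (A : TP n a →L[ℂ] TP n a) (w v : Wd n a) : ℂ :=
  A (EuclideanSpace.single v 1) w

def wfst {m k : ℕ} (w : Wd n (m + k)) : Wd n m := fun i => w (Fin.castAdd k i)
def wsnd {m k : ℕ} (w : Wd n (m + k)) : Wd n k := fun i => w (Fin.natAdd m i)

/-- Tensor product of vectors, under the identification `H^{⊗m} ⊗ H^{⊗k} = H^{⊗(m+k)}`. -/
def tmul {m k : ℕ} (x : TP n m) (y : TP n k) : TP n (m + k) :=
  (WithLp.equiv 2 _).symm (fun w => x (wfst w) * y (wsnd w))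

/-- Tensor product of subspaces `K ⊗ L ⊆ H^{⊗(m+k)}`. -/
def tensorSub {m k : ℕ} (K : Submodule ℂ (TP n m)) (L : Submodule ℂ (TP n k)) :
    Submodule ℂ (TP n (m + k)) :=
  Submodule.span ℂ {z | ∃ x ∈ K, ∃ y ∈ L, z = tmul x y}

/-- Tensor product of operators, under `H^{⊗m} ⊗ H^{⊗k} = H^{⊗(m+k)}`. -/
def opT {m k : ℕ} (A : TP n m →L[ℂ] TP n m) (B : TP n k →L[ℂ] TP n k) :
    TP n (m + k) →L[ℂ] TP n (m + k) :=
  ofMatR (Matrix.of fun w v => ent A (wfst w) (wfst v) * ent B (wsnd w) (wsnd v))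

/-- A subproduct system: `H_0 = ℂ` and `H_{m+k} ⊆ H_m ⊗ H_k`. -/
def IsSubproduct (H : ∀ m, Submodule ℂ (TP n m)) : Prop :=
  H 0 = ⊤ ∧ ∀ m k, H (m + k) ≤ tensorSub (H m) (H k)

/-- The orthogonal projection `p_m : H^{⊗m} → H_m` (as an operator on `H^{⊗m}`). -/
def prj (H : ∀ m, Submodule ℂ (TP n m)) (m : ℕ) : TP n m →L[ℂ] TP n m :=
  (H m).subtypeL ∘L (H m).orthogonalProjection

/-- Left creation operator `x ↦ e_j ⊗ x`. -/
def lcreate (j : Fin n) (m : ℕ) : TP n m →L[ℂ] TP n (m + 1) :=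
  ofMatR (Matrix.of fun (w : Wd n (m + 1)) (v : Wd n m) =>
    if w 0 = j ∧ (fun i : Fin m => w i.succ) = v then 1 else 0)

/-- Right creation operator `x ↦ x ⊗ e_j`. -/
def rcreate (j : Fin n) (m : ℕ) : TP n m →L[ℂ] TP n (m + 1) :=
  ofMatR (Matrix.of fun (w : Wd n (m + 1)) (v : Wd n m) =>
    if w (Fin.last m) = j ∧ (fun i : Fin m => w i.castSucc) = v then 1 else 0)

/-- Graded component of the left shift `S_j : H_m → H_{m+1}`, `φ ↦ p_{m+1}(e_j ⊗ φ)`. -/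
def lsh (H : ∀ m, Submodule ℂ (TP n m)) (j : Fin n) (m : ℕ) : TP n m →L[ℂ] TP n (m + 1) :=
  prj H (m + 1) ∘L lcreate j m ∘L prj H m

/-- Graded component of the right shift `R_j : H_m → H_{m+1}`, `φ ↦ p_{m+1}(φ ⊗ e_j)`. -/
def rsh (H : ∀ m, Submodule ℂ (TP n m)) (j : Fin n) (m : ℕ) : TP n m →L[ℂ] TP n (m + 1) :=
  prj H (m + 1) ∘L rcreate j m ∘L prj H m

/-- Iterated left shift `S_r = S_{r_1} ⋯ S_{r_d}` as a map `H_m → H_{m+d}`. -/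
def lshW (H : ∀ m, Submodule ℂ (TP n m)) (m : ℕ) :
    ∀ d, Wd n d → (TP n m →L[ℂ] TP n (m + d))
  | 0, _ => ContinuousLinearMap.id ℂ _
  | d + 1, r => lsh H (r 0) (m + d) ∘L lshW H m d (Fin.tail r)

/-- Iterated right shift `R_r = R_{r_1} ⋯ R_{r_d}` as a map `H_m → H_{m+d}`. -/
def rshW (H : ∀ m, Submodule ℂ (TP n m)) (m : ℕ) :
    ∀ d, Wd n d → (TP n m →L[ℂ] TP n (m + d))
  | 0, _ => ContinuousLinearMap.id ℂ _
  | d + 1, r => rsh H (r (Fin.last d)) (m + d) ∘L rshW H m d (Fin.init r)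

/-- Canonical unitary identification `H^{⊗a} = H^{⊗b}` for `a = b`. -/
def castTP {a b : ℕ} (h : a = b) : TP n a →L[ℂ] TP n b :=
  ofMatR (Matrix.of fun (w : Wd n b) (v : Wd n a) =>
    if (fun i => w (Fin.cast h i)) = v then 1 else 0)

/-- `S_s : H_m → H_l` for a word `s` of length `l - m`. -/
def lshWTo (H : ∀ m, Submodule ℂ (TP n m)) (m l : ℕ) (h : m ≤ l) (s : Wd n (l - m)) :
    TP n m →L[ℂ] TP n l :=
  castTP (by omega : m + (l - m) = l) ∘L lshW H m (l - m) s

/-- `R_r : H_m → H_l` for a word `r` of length `l - m`. -/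
def rshWTo (H : ∀ m, Submodule ℂ (TP n m)) (m l : ℕ) (h : m ≤ l) (r : Wd n (l - m)) :
    TP n m →L[ℂ] TP n l :=
  castTP (by omega : m + (l - m) = l) ∘L rshW H m (l - m) r

/-- Extension of an operator on `H_m` by zero to `H^{⊗m}`. -/
def extOp (H : ∀ m, Submodule ℂ (TP n m)) {m : ℕ} (A : ↥(H m) →L[ℂ] ↥(H m)) :
    TP n m →L[ℂ] TP n m :=
  (H m).subtypeL ∘L A ∘L (H m).orthogonalProjection

/-- Compression of an operator on `H^{⊗m}` to `H_m`. -/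
def cmpOp (H : ∀ m, Submodule ℂ (TP n m)) {m : ℕ} (T : TP n m →L[ℂ] TP n m) :
    ↥(H m) →L[ℂ] ↥(H m) :=
  (H m).orthogonalProjection ∘L T ∘L (H m).subtypeL

def tk {m l : ℕ} (h : m ≤ l) (w : Wd n l) : Wd n m := fun i => w (Fin.castLE h i)
def dr (m : ℕ) {l : ℕ} (w : Wd n l) : Wd n (l - m) :=
  fun i => w ⟨m + i.1, by have := i.isLt; omega⟩

/-- `A ⊗ B` on `H^{⊗l} = H^{⊗m} ⊗ H^{⊗(l-m)}`. -/
def opTG {m l : ℕ} (h : m ≤ l) (A : TP n m →L[ℂ] TP n m)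
    (B : TP n (l - m) →L[ℂ] TP n (l - m)) : TP n l →L[ℂ] TP n l :=
  ofMatR (Matrix.of fun w v => ent A (tk h w) (tk h v) * ent B (dr m w) (dr m v))

/-- The inductive-system map `ι_{m,l}(A) = p_l (A ⊗ 1) p_l : B(H_m) → B(H_l)`. -/
def iota (H : ∀ m, Submodule ℂ (TP n m)) {m l : ℕ} (h : m ≤ l)
    (A : ↥(H m) →L[ℂ] ↥(H m)) : ↥(H l) →L[ℂ] ↥(H l) :=
  cmpOp H (opTG h (extOp H A) (ContinuousLinearMap.id ℂ (TP n (l - m))))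

/-- The chirality-flipped inductive map `ῑ_{m,l}(A) = Σ_{|s|=l-m} S_s A S_s^* |_{H_l}`. -/
def iotabar (H : ∀ m, Submodule ℂ (TP n m)) {m l : ℕ} (h : m ≤ l)
    (A : ↥(H m) →L[ℂ] ↥(H m)) : ↥(H l) →L[ℂ] ↥(H l) :=
  cmpOp H (∑ s : Wd n (l - m),
    lshWTo H m l h s ∘L extOp H A ∘L ContinuousLinearMap.adjoint (lshWTo H m l h s))

/-- The word `j` of length one. -/
def letter (j : Fin n) : Wd n 1 := fun _ => j

/-- `Q^{⊗m}` on `H^{⊗m}`. -/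
def tpow (Q : TP n 1 →L[ℂ] TP n 1) (m : ℕ) : TP n m →L[ℂ] TP n m :=
  ofMatR (Matrix.of fun w v => ∏ i : Fin m, ent Q (letter (w i)) (letter (v i)))

/-- Diagonal entry `(Q^{⊗d})_{r,r}`. -/
def Qdg (Q : TP n 1 →L[ℂ] TP n 1) {d : ℕ} (r : Wd n d) : ℂ :=
  ∏ i, ent Q (letter (r i)) (letter (r i))

/-- Trace of an operator. -/
def trOp {E : Type*} [NormedAddCommGroup E] [Module ℂ E] (A : E →L[ℂ] E) : ℂ :=
  LinearMap.trace ℂ E A.toLinearMap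

/-- `Tr(Q_m)` where `Q_m = p_m Q^{⊗m} p_m ∈ B(H_m)`. -/
def trQ (H : ∀ m, Submodule ℂ (TP n m)) (Q : TP n 1 →L[ℂ] TP n 1) (m : ℕ) : ℂ :=
  trOp (cmpOp H (tpow Q m))

/-- The state `φ_m(A) = Tr(ρ^{(m)} A)`, `ρ^{(m)} = Q_m / Tr(Q_m)`. -/
def phiSt (H : ∀ m, Submodule ℂ (TP n m)) (Q : TP n 1 →L[ℂ] TP n 1) (m : ℕ)
    (A : ↥(H m) →L[ℂ] ↥(H m)) : ℂ :=
  trOp (cmpOp H (tpow Q m) ∘L A) / trQ H Q m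

/-- The projective-system map
`j_{l,m}(A) = (Tr Q_m / Tr Q_l) Σ_{|r|=l-m} (Q^{⊗(l-m)})_{r,r} R_r^* A R_r |_{H_m}`. -/
def jmap (H : ∀ m, Submodule ℂ (TP n m)) (Q : TP n 1 →L[ℂ] TP n 1) {m l : ℕ} (h : m ≤ l)
    (A : ↥(H l) →L[ℂ] ↥(H l)) : ↥(H m) →L[ℂ] ↥(H m) :=
  (trQ H Q m / trQ H Q l) • cmpOp H (∑ r : Wd n (l - m),
    Qdg Q r • (ContinuousLinearMap.adjoint (rshWTo H m l h r) ∘L extOp H A ∘L rshWTo H m l h r))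

/-- `ρ^{(m)} = Q_m / Tr(Q_m)`, extended by zero to `H^{⊗m}`. -/
def rhoExt (H : ∀ m, Submodule ℂ (TP n m)) (Q : TP n 1 →L[ℂ] TP n 1) (m : ℕ) :
    TP n m →L[ℂ] TP n m :=
  (trQ H Q m)⁻¹ • (prj H m ∘L tpow Q m ∘L prj H m)

/-- The normalization constant `√(Tr(Q_m)Tr(Q_k)/Tr(Q_{m+k}))`. -/
def lamC (H : ∀ m, Submodule ℂ (TP n m)) (Q : TP n 1 →L[ℂ] TP n 1) (m k : ℕ) : ℂ :=
  (trQ H Q m * trQ H Q k / trQ H Q (m + k)) ^ ((1 : ℂ) / 2)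

/-- Right tensoring `x ↦ x ⊗ y` as a continuous linear map. -/
def tensR {m k : ℕ} (y : TP n k) : TP n m →L[ℂ] TP n (m + k) :=
  ofMatR (Matrix.of fun w v => if wfst w = v then y (wsnd w) else 0)

/-- The map `V_{m,l} ψ = √(TrQ_m TrQ_{l-m}/TrQ_l) Σ_{|r|=l-m} p_l (R_r^* ψ ⊗ e_r)`,
realized as an operator on `H^{⊗(m+k)}` (with `l = m + k`). -/
def Vml (H : ∀ m, Submodule ℂ (TP n m)) (Q : TP n 1 →L[ℂ] TP n 1) (m k : ℕ) :
    TP n (m + k) →L[ℂ] TP n (m + k) :=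
  lamC H Q m k • ∑ r : Wd n k,
    prj H (m + k) ∘L tensR (EuclideanSpace.single r 1) ∘L
      ContinuousLinearMap.adjoint (rshW H m k r)

/-- The claimed adjoint `V_{m,l}^* = √(⋯) (ρ^{(l)})^{-1}(ρ^{(m)} ⊗ ρ^{(l-m)})`. -/
def VmlStar (H : ∀ m, Submodule ℂ (TP n m)) (Q : TP n 1 →L[ℂ] TP n 1) (m k : ℕ) :
    TP n (m + k) →L[ℂ] TP n (m + k) :=
  lamC H Q m k •
    (extOp H (trQ H Q (m + k) • Ring.inverse (cmpOp H (tpow Q (m + k)))) ∘L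
      opT (rhoExt H Q m) (rhoExt H Q k))

/-- The adjoint, with instances supplied explicitly. -/
def adjC {E F : Type*} [NormedAddCommGroup E] [NormedAddCommGroup F]
    [InnerProductSpace ℂ E] [InnerProductSpace ℂ F] [CompleteSpace E] [CompleteSpace F]
    (T : E →L[ℂ] F) : F →L[ℂ] E :=
  @ContinuousLinearMap.adjoint ℂ E F _ _ _ _ _ _ _ T

/-- Complete positivity of a map between operator algebras on Hilbert spaces:
positive matrices over the domain are sent to positive matrices over the codomain.
(Here `Nᴴ` is written as the transpose of the entrywise adjoint.) -/
def IsCP {E F' : Type*} [NormedAddCommGroup E] [InnerProductSpace ℂ E] [CompleteSpace E]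
    [NormedAddCommGroup F'] [InnerProductSpace ℂ F'] [CompleteSpace F']
    (Φ : (E →L[ℂ] E) → (F' →L[ℂ] F')) : Prop :=
  ∀ (d : ℕ) (M : Matrix (Fin d) (Fin d) (E →L[ℂ] E)),
    (∃ N : Matrix (Fin d) (Fin d) (E →L[ℂ] E), M = (N.map fun T => adjC T)ᵀ * N) →
    ∃ N' : Matrix (Fin d) (Fin d) (F' →L[ℂ] F'), M.map Φ = (N'.map fun T => adjC T)ᵀ * N'

/-- The vacuum vector `Ω ∈ H^{⊗0} = ℂ`. -/
def vac (n : ℕ) : TP n 0 := EuclideanSpace.single default 1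

/-- The symmetric subspace `H^{∨m} ⊆ H^{⊗m}`. -/
def symSub (n m : ℕ) : Submodule ℂ (TP n m) where
  carrier := {x | ∀ (σ : Equiv.Perm (Fin m)) (w : Wd n m), x (w ∘ σ) = x w}
  add_mem' := by
    intro a b ha hb σ w
    show (a + b) (w ∘ σ) = (a + b) w
    simp only [PiLp.add_apply, ha σ w, hb σ w]
  zero_mem' := by
    intro σ w
    show (0 : TP n m) (w ∘ σ) = (0 : TP n m) w
    simp
  smul_mem' := by
    intro c x hx σ w
    show (c • x) (w ∘ σ) = (c • x) w
    simp only [PiLp.smul_apply, hx σ w]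

/-- Rank-one operator `|x⟩⟨x|`. -/
def rankOne {F : Type*} [NormedAddCommGroup F] [InnerProductSpace ℂ F] (x : F) :
    F →L[ℂ] F :=
  (innerSL ℂ x).smulRight x

end


noncomputable section Aux

open ContinuousLinearMap

local notation "⟪" x ", " y "⟫" => @inner ℂ _ _ x y

variable {n : ℕ}

lemma ofMatR_apply {ι κ : Type} [Fintype ι] [Fintype κ] [DecidableEq ι] [DecidableEq κ]
    (M : Matrix ι κ ℂ) (x : EuclideanSpace ℂ κ) (w : ι) :
    ofMatR M x w = ∑ v, M w v * x v := by
  simp [ofMatR, Matrix.toEuclideanLin_apply, Matrix.mulVec, dotProduct]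

lemma clm_ext_single {ι κ : Type} [Fintype ι] [Fintype κ] [DecidableEq ι]
    {T U : EuclideanSpace ℂ ι →L[ℂ] EuclideanSpace ℂ κ}
    (h : ∀ v, T (EuclideanSpace.single v 1) = U (EuclideanSpace.single v 1)) : T = U := by
  apply ContinuousLinearMap.coe_injective
  apply Module.Basis.ext (EuclideanSpace.basisFun ι ℂ).toBasis
  intro v
  simpa [EuclideanSpace.basisFun_apply] using h v

lemma adjoint_single_coord {ι κ : Type} [Fintype ι] [Fintype κ] [DecidableEq ι] [DecidableEq κ]
    (T : EuclideanSpace ℂ ι →L[ℂ] EuclideanSpace ℂ κ) (v : κ) (u : ι) :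
    (ContinuousLinearMap.adjoint T (EuclideanSpace.single v 1)) u
      = starRingEnd ℂ (T (EuclideanSpace.single u 1) v) := by
  have h1 : (ContinuousLinearMap.adjoint T (EuclideanSpace.single v 1)) u
      = ⟪EuclideanSpace.single u (1:ℂ), ContinuousLinearMap.adjoint T (EuclideanSpace.single v 1)⟫ := by
    simp [EuclideanSpace.inner_single_left]
  rw [h1, ContinuousLinearMap.adjoint_inner_right]
  simp [EuclideanSpace.inner_single_right]

lemma tmul_apply {a b : ℕ} (x : TP n a) (y : TP n b) (w : Wd n (a+b)) :
    tmul x y w = x (wfst w) * y (wsnd w) := rfl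

def wE (n a b : ℕ) : Wd n (a+b) ≃ Wd n a × Wd n b :=
  (Equiv.arrowCongr finSumFinEquiv.symm (Equiv.refl (Fin n))).trans
    (Equiv.sumArrowEquivProdArrow _ _ _)

lemma wE_apply {a b : ℕ} (w : Wd n (a+b)) : wE n a b w = (wfst w, wsnd w) := by
  simp only [wE, Equiv.sumArrowEquivProdArrow, Equiv.trans_apply, Equiv.arrowCongr_apply,
    Equiv.coe_fn_mk, Equiv.symm_symm, Equiv.coe_refl, Prod.mk.injEq]
  constructor <;> funext i <;> simp [wfst, wsnd]

lemma wfst_symm {a b : ℕ} (p : Wd n a × Wd n b) : wfst ((wE n a b).symm p) = p.1 := by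
  have := wE_apply ((wE n a b).symm p)
  rw [Equiv.apply_symm_apply] at this
  exact (congrArg Prod.fst this).symm

lemma wsnd_symm {a b : ℕ} (p : Wd n a × Wd n b) : wsnd ((wE n a b).symm p) = p.2 := by
  have := wE_apply ((wE n a b).symm p)
  rw [Equiv.apply_symm_apply] at this
  exact (congrArg Prod.snd this).symm

lemma inner_tmul {a b : ℕ} (x x' : TP n a) (y y' : TP n b) :
    ⟪tmul x y, tmul x' y'⟫ = ⟪x, x'⟫ * ⟪y, y'⟫ := by
  simp only [PiLp.inner_apply, RCLike.inner_apply]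
  rw [← Equiv.sum_comp (wE n a b).symm (fun w => (tmul x' y') w * starRingEnd ℂ ((tmul x y) w))]
  rw [Fintype.sum_prod_type, Finset.sum_mul_sum]
  apply Finset.sum_congr rfl; intro u _
  apply Finset.sum_congr rfl; intro v _
  simp only [tmul_apply, map_mul]
  rw [wfst_symm, wsnd_symm]
  ring


lemma castTP_apply {a b : ℕ} (h : a = b) (x : TP n a) (w : Wd n b) :
    castTP h x w = x (fun i => w (Fin.cast h i)) := by
  simp [castTP, ofMatR_apply, ite_mul, Finset.sum_ite_eq]

lemma castTP_rfl {a : ℕ} (x : TP n a) : castTP (rfl : a = a) x = x := by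
  ext w; rw [castTP_apply]; exact congrArg x rfl

lemma mem_castTP (H : ∀ m, Submodule ℂ (TP n m)) {a b : ℕ} (h : a = b) {x : TP n a}
    (hx : x ∈ H a) : castTP h x ∈ H b := by
  subst h; rwa [castTP_rfl]

lemma inner_castTP_left {a b : ℕ} (h : a = b) (u : TP n b) (t : TP n a) :
    ⟪u, castTP h t⟫ = ⟪castTP h.symm u, t⟫ := by
  subst h; rw [castTP_rfl, castTP_rfl]

section PrjLemmas

variable (H : ∀ m, Submodule ℂ (TP n m))

lemma prj_prj (a : ℕ) (x : TP n a) : prj H a (prj H a x) = prj H a x := by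
  simp [prj, Submodule.orthogonalProjectionOnto_mem_subspace_eq_self, Submodule.starProjection_eq_self_iff]

lemma prj_mem_eq (a : ℕ) {x : TP n a} (hx : x ∈ H a) : prj H a x = x :=
  congrArg Subtype.val (Submodule.orthogonalProjectionOnto_mem_subspace_eq_self (K := H a) ⟨x, hx⟩)

lemma prj_eq_zero {a : ℕ} {x : TP n a} (hx : ∀ u ∈ H a, ⟪u, x⟫ = 0) : prj H a x = 0 := by
  have hmem : x ∈ (H a)ᗮ := (Submodule.mem_orthogonal _ _).2 hx
  simp [prj, Submodule.orthogonalProjectionOnto_apply_of_mem_orthogonal hmem]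

lemma prj_adjoint (a : ℕ) : ContinuousLinearMap.adjoint (prj H a) = prj H a :=
  (isSelfAdjoint_starProjection (H a)).adjoint_eq

lemma sub_prj_perp (a : ℕ) (x : TP n a) : ∀ u ∈ H a, ⟪u, x - prj H a x⟫ = 0 := fun u hu =>
  (Submodule.mem_orthogonal _ _).1 (Submodule.sub_starProjection_mem_orthogonal (K := H a) x) u hu

end PrjLemmas

lemma inner_tensorSub_right {a b : ℕ} (K : Submodule ℂ (TP n a)) (L : Submodule ℂ (TP n b))
    (x : TP n a) {y : TP n b} (hy : ∀ v ∈ L, ⟪v, y⟫ = 0)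
    {z : TP n (a+b)} (hz : z ∈ tensorSub K L) : ⟪z, tmul x y⟫ = 0 := by
  induction hz using Submodule.span_induction with
  | mem z hz =>
    obtain ⟨u, hu, v, hv, rfl⟩ := hz
    rw [inner_tmul, hy v hv, mul_zero]
  | zero => simp
  | add _ _ _ _ h1 h2 => rw [inner_add_left, h1, h2, add_zero]
  | smul c _ _ h => rw [inner_smul_left, h, mul_zero]

lemma inner_tensorSub_left {a b : ℕ} (K : Submodule ℂ (TP n a)) (L : Submodule ℂ (TP n b))
    {x : TP n a} (hx : ∀ u ∈ K, ⟪u, x⟫ = 0) (y : TP n b)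
    {z : TP n (a+b)} (hz : z ∈ tensorSub K L) : ⟪z, tmul x y⟫ = 0 := by
  induction hz using Submodule.span_induction with
  | mem z hz =>
    obtain ⟨u, hu, v, hv, rfl⟩ := hz
    rw [inner_tmul, hx u hu, zero_mul]
  | zero => simp
  | add _ _ _ _ h1 h2 => rw [inner_add_left, h1, h2, add_zero]
  | smul c _ _ h => rw [inner_smul_left, h, mul_zero]

lemma rcreate_apply_coord (j : Fin n) (a : ℕ) (x : TP n a) (w : Wd n (a+1)) :
    rcreate j a x w = if w (Fin.last a) = j then x (fun i => w i.castSucc) else 0 := by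
  rw [rcreate, ofMatR_apply]
  by_cases h : w (Fin.last a) = j
  · simp [h, ite_mul, Finset.sum_ite_eq]
  · simp [h]

lemma lcreate_apply_coord (j : Fin n) (a : ℕ) (x : TP n a) (w : Wd n (a+1)) :
    lcreate j a x w = if w 0 = j then x (fun i => w i.succ) else 0 := by
  rw [lcreate, ofMatR_apply]
  by_cases h : w 0 = j
  · simp [h, ite_mul, Finset.sum_ite_eq]
  · simp [h]

lemma rcreate_eq_tmul (j : Fin n) (a : ℕ) (x : TP n a) :
    rcreate j a x = tmul x (EuclideanSpace.single (letter j) 1) := by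
  ext w
  rw [rcreate_apply_coord, tmul_apply]
  have hsnd : wsnd w = letter (w (Fin.last a)) := by
    funext i
    have : Fin.natAdd a i = Fin.last a := by
      apply Fin.ext; simp [Fin.ext_iff, Subsingleton.elim i 0]
    simp [wsnd, letter, this]
  have hfst : wfst w = fun i : Fin a => w i.castSucc := rfl
  by_cases h : w (Fin.last a) = j
  · rw [if_pos h, hsnd, h, hfst]
    simp [EuclideanSpace.single_apply, letter]
  · rw [if_neg h, hsnd]
    rw [EuclideanSpace.single_apply]
    rw [if_neg (by intro hc; exact h (congrFun hc 0))]
    simp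

lemma lcreate_eq_cast_tmul (j : Fin n) (a : ℕ) (x : TP n a) :
    lcreate j a x = castTP (Nat.add_comm 1 a) (tmul (EuclideanSpace.single (letter j) 1) x) := by
  ext w
  rw [lcreate_apply_coord, castTP_apply, tmul_apply]
  have hfst : wfst (fun i : Fin (1+a) => w (Fin.cast (Nat.add_comm 1 a) i)) = letter (w 0) := by
    funext i
    have : Fin.cast (Nat.add_comm 1 a) (Fin.castAdd a i) = (0 : Fin (a+1)) := by
      apply Fin.ext; simp [Fin.ext_iff, Subsingleton.elim i 0]
    simp [wfst, letter, this]
  have hsnd : wsnd (fun i : Fin (1+a) => w (Fin.cast (Nat.add_comm 1 a) i))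
      = fun i : Fin a => w i.succ := by
    funext i
    have : Fin.cast (Nat.add_comm 1 a) (Fin.natAdd 1 i) = i.succ := by
      apply Fin.ext; simp [Fin.ext_iff]
    simp [wsnd, this]
  rw [hfst, hsnd]
  by_cases h : w 0 = j
  · rw [if_pos h, h]
    simp [EuclideanSpace.single_apply, letter]
  · rw [if_neg h, EuclideanSpace.single_apply]
    rw [if_neg (by intro hc; exact h (congrFun hc 0))]
    simp

section Absorb

variable (H : ∀ m, Submodule ℂ (TP n m)) (hsp : IsSubproduct H)
include hsp

lemma prjR_absorb (a : ℕ) (j : Fin n) (x : TP n a) :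
    prj H (a+1) (rcreate j a (prj H a x)) = prj H (a+1) (rcreate j a x) := by
  have h0 : prj H (a+1) (rcreate j a (x - prj H a x)) = 0 := by
    apply prj_eq_zero
    intro u hu
    rw [rcreate_eq_tmul]
    exact inner_tensorSub_left (H a) (H 1) (sub_prj_perp H a x) _ (hsp.2 a 1 hu)
  rw [map_sub, map_sub] at h0
  exact (sub_eq_zero.mp h0).symm

lemma prjL_absorb (a : ℕ) (j : Fin n) (x : TP n a) :
    prj H (a+1) (lcreate j a (prj H a x)) = prj H (a+1) (lcreate j a x) := by
  have h0 : prj H (a+1) (lcreate j a (x - prj H a x)) = 0 := by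
    apply prj_eq_zero
    intro u hu
    rw [lcreate_eq_cast_tmul, inner_castTP_left]
    exact inner_tensorSub_right (H 1) (H a) _ (sub_prj_perp H a x)
      (hsp.2 1 a (mem_castTP H _ hu))
  rw [map_sub, map_sub] at h0
  exact (sub_eq_zero.mp h0).symm

end Absorb

/-- Pure right-creation chain. -/
def rcW (m : ℕ) : ∀ d, Wd n d → (TP n m →L[ℂ] TP n (m + d))
  | 0, _ => ContinuousLinearMap.id ℂ _
  | d+1, r => rcreate (r (Fin.last d)) (m+d) ∘L rcW m d (Fin.init r)

/-- Pure left-creation chain. -/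
def lcW (k : ℕ) : ∀ d, Wd n d → (TP n k →L[ℂ] TP n (k + d))
  | 0, _ => ContinuousLinearMap.id ℂ _
  | d+1, r => lcreate (r 0) (k+d) ∘L lcW k d (Fin.tail r)

section Chains

variable (H : ∀ m, Submodule ℂ (TP n m)) (hsp : IsSubproduct H)
include hsp

lemma prj_rshW (m d : ℕ) (r : Wd n d) :
    prj H (m+d) ∘L rshW H m d r = prj H (m+d) ∘L (rcW m d r ∘L prj H m) := by
  induction d with
  | zero =>
    ext x
    simp [rshW, rcW, prj_prj]
  | succ d ih =>
    refine ContinuousLinearMap.ext fun x => ?_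
    have ihx := DFunLike.congr_fun (ih (Fin.init r)) x
    simp only [ContinuousLinearMap.comp_apply] at ihx
    show prj H (m+d+1) (prj H (m+d+1) (rcreate (r (Fin.last d)) (m+d)
        (prj H (m+d) (rshW H m d (Fin.init r) x))))
      = prj H (m+d+1) (rcreate (r (Fin.last d)) (m+d) (rcW m d (Fin.init r) (prj H m x)))
    rw [prj_prj, ihx, prjR_absorb H hsp]

lemma prj_lshW (k d : ℕ) (r : Wd n d) :
    prj H (k+d) ∘L lshW H k d r = prj H (k+d) ∘L (lcW k d r ∘L prj H k) := by
  induction d with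
  | zero =>
    ext x
    simp [lshW, lcW, prj_prj]
  | succ d ih =>
    refine ContinuousLinearMap.ext fun x => ?_
    have ihx := DFunLike.congr_fun (ih (Fin.tail r)) x
    simp only [ContinuousLinearMap.comp_apply] at ihx
    show prj H (k+d+1) (prj H (k+d+1) (lcreate (r 0) (k+d)
        (prj H (k+d) (lshW H k d (Fin.tail r) x))))
      = prj H (k+d+1) (lcreate (r 0) (k+d) (lcW k d (Fin.tail r) (prj H k x)))
    rw [prj_prj, ihx, prjL_absorb H hsp]

omit hsp in
lemma inner_prj (a : ℕ) (u v : TP n a) : ⟪prj H a u, v⟫ = ⟪u, prj H a v⟫ :=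
  Submodule.inner_starProjection_left_eq_right (H a) u v

lemma adj_rshW_pt (m d : ℕ) (r : Wd n d) (x : TP n (m+d)) :
    ContinuousLinearMap.adjoint (rshW H m d r) (prj H (m+d) x)
      = prj H m (ContinuousLinearMap.adjoint (rcW m d r) (prj H (m+d) x)) := by
  apply ext_inner_left ℂ
  intro y
  rw [ContinuousLinearMap.adjoint_inner_right, ← inner_prj, ← inner_prj]
  have hc := DFunLike.congr_fun (prj_rshW H hsp m d r) y
  simp only [ContinuousLinearMap.comp_apply] at hc
  rw [hc, inner_prj, ContinuousLinearMap.adjoint_inner_right]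

lemma adj_lshW_pt (k d : ℕ) (r : Wd n d) (x : TP n (k+d)) :
    ContinuousLinearMap.adjoint (lshW H k d r) (prj H (k+d) x)
      = prj H k (ContinuousLinearMap.adjoint (lcW k d r) (prj H (k+d) x)) := by
  apply ext_inner_left ℂ
  intro y
  rw [ContinuousLinearMap.adjoint_inner_right, ← inner_prj, ← inner_prj]
  have hc := DFunLike.congr_fun (prj_lshW H hsp k d r) y
  simp only [ContinuousLinearMap.comp_apply] at hc
  rw [hc, inner_prj, ContinuousLinearMap.adjoint_inner_right]

end Chains

section ExtCmp

variable (H : ∀ m, Submodule ℂ (TP n m))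

lemma prj_extOp {m : ℕ} (A : ↥(H m) →L[ℂ] ↥(H m)) (x : TP n m) :
    prj H m (extOp H A x) = extOp H A x := by
  simp [extOp, prj, Submodule.orthogonalProjectionOnto_mem_subspace_eq_self]

lemma extOp_prj {m : ℕ} (A : ↥(H m) →L[ℂ] ↥(H m)) (x : TP n m) :
    extOp H A (prj H m x) = extOp H A x := by
  simp only [extOp, prj, ContinuousLinearMap.comp_apply]
  exact congrArg (H m).subtypeL (congrArg A
    (Submodule.orthogonalProjectionOnto_mem_subspace_eq_self ((H m).orthogonalProjectionOnto x)))

lemma cmpOp_eq {l : ℕ} {X X' : TP n l →L[ℂ] TP n l}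
    (h : ∀ x, prj H l (X (prj H l x)) = prj H l (X' (prj H l x))) : cmpOp H X = cmpOp H X' := by
  refine ContinuousLinearMap.ext fun ξ => Subtype.ext ?_
  have h2 := h (ξ : TP n l)
  rw [prj_mem_eq H l ξ.2] at h2
  exact h2

end ExtCmp

lemma rcW_apply (m : ℕ) : ∀ (d : ℕ) (r : Wd n d) (x : TP n m) (w : Wd n (m+d)),
    rcW m d r x w =
      (if (fun i : Fin d => w (Fin.natAdd m i)) = r then 1 else 0) *
        x (fun i : Fin m => w (Fin.castAdd d i))
  | 0, r, x, w => by
    rw [if_pos (funext fun i => i.elim0), one_mul]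
    rfl
  | d+1, r, x, w => by
    have hstep : rcW m (d+1) r x w
        = rcreate (r (Fin.last d)) (m+d) (rcW m d (Fin.init r) x) w := rfl
    rw [hstep, rcreate_apply_coord, rcW_apply m d (Fin.init r) x (fun i => w i.castSucc)]
    have elast : Fin.natAdd m (Fin.last d) = Fin.last (m+d) := Fin.ext rfl
    by_cases h1 : w (Fin.last (m+d)) = r (Fin.last d)
    · rw [if_pos h1]
      have harg : (fun i : Fin m => w ((Fin.castAdd d i).castSucc))
          = (fun i : Fin m => w (Fin.castAdd (d+1) i)) :=
        funext fun i => congrArg w (Fin.ext rfl)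
      have hcnd : ((fun i : Fin d => w ((Fin.natAdd m i).castSucc)) = Fin.init r)
          ↔ ((fun i : Fin (d+1) => w (Fin.natAdd m i)) = r) := by
        rw [funext_iff, funext_iff, Fin.forall_fin_succ']
        constructor
        · intro h
          refine ⟨fun j => ?_, ?_⟩
          · have hj := h j
            have e : Fin.natAdd m j.castSucc = (Fin.natAdd m j).castSucc := Fin.ext rfl
            rw [e]; exact hj
          · rw [elast]; exact h1
        · rintro ⟨h, _⟩ j
          have e : (Fin.natAdd m j).castSucc = Fin.natAdd m j.castSucc := Fin.ext rfl
          rw [e]; exact h j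
      by_cases h2 : (fun i : Fin d => w ((Fin.natAdd m i).castSucc)) = Fin.init r
      · rw [if_pos h2, if_pos (hcnd.mp h2), harg]
      · rw [if_neg h2, if_neg (fun hc => h2 (hcnd.mpr hc)), zero_mul, zero_mul]
    · rw [if_neg h1, if_neg, zero_mul]
      intro hc
      apply h1
      have hx := congrFun hc (Fin.last d)
      rwa [elast] at hx

lemma lcW_apply (k : ℕ) : ∀ (d : ℕ) (r : Wd n d) (x : TP n k) (w : Wd n (k+d)),
    lcW k d r x w =
      (if (fun i : Fin d => w (Fin.cast (Nat.add_comm d k) (Fin.castAdd k i))) = r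
        then 1 else 0) *
        x (fun i : Fin k => w (Fin.cast (Nat.add_comm d k) (Fin.natAdd d i)))
  | 0, r, x, w => by
    rw [if_pos (funext fun i => i.elim0), one_mul]
    exact congrArg x (funext fun i => congrArg w (Fin.ext (by simp)))
  | d+1, r, x, w => by
    have hstep : lcW k (d+1) r x w
        = lcreate (r 0) (k+d) (lcW k d (Fin.tail r) x) w := rfl
    rw [hstep, lcreate_apply_coord, lcW_apply k d (Fin.tail r) x (fun i => w i.succ)]
    have e0 : Fin.cast (Nat.add_comm (d+1) k) (Fin.castAdd k (0 : Fin (d+1)))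
        = (0 : Fin (k+d+1)) := Fin.ext (by simp)
    by_cases h1 : w (0 : Fin (k+d+1)) = r 0
    · rw [if_pos h1]
      have harg : (fun i : Fin k => w ((Fin.cast (Nat.add_comm d k) (Fin.natAdd d i)).succ))
          = (fun i : Fin k => w (Fin.cast (Nat.add_comm (d+1) k) (Fin.natAdd (d+1) i))) :=
        funext fun i => congrArg w (Fin.ext (by simp; omega))
      have hcnd : ((fun i : Fin d => w ((Fin.cast (Nat.add_comm d k) (Fin.castAdd k i)).succ))
            = Fin.tail r)
          ↔ ((fun i : Fin (d+1) => w (Fin.cast (Nat.add_comm (d+1) k) (Fin.castAdd k i))) = r) := by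
        rw [funext_iff, funext_iff, Fin.forall_fin_succ]
        constructor
        · intro h
          refine ⟨?_, fun j => ?_⟩
          · rw [e0]; exact h1
          · have hj := h j
            have e : Fin.cast (Nat.add_comm (d+1) k) (Fin.castAdd k j.succ)
                = (Fin.cast (Nat.add_comm d k) (Fin.castAdd k j)).succ := Fin.ext (by simp)
            rw [e]; exact hj
        · rintro ⟨_, h⟩ j
          have e : (Fin.cast (Nat.add_comm d k) (Fin.castAdd k j)).succ
              = Fin.cast (Nat.add_comm (d+1) k) (Fin.castAdd k j.succ) := Fin.ext (by simp)
          rw [e]; exact h j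
      by_cases h2 : (fun i : Fin d => w ((Fin.cast (Nat.add_comm d k) (Fin.castAdd k i)).succ))
          = Fin.tail r
      · rw [if_pos h2, if_pos (hcnd.mp h2), harg]
      · rw [if_neg h2, if_neg (fun hc => h2 (hcnd.mpr hc)), zero_mul, zero_mul]
    · rw [if_neg h1, if_neg, zero_mul]
      intro hc
      apply h1
      have hx := congrFun hc 0
      rwa [e0] at hx

lemma adj_rcW_single (m d : ℕ) (r : Wd n d) (v : Wd n (m+d)) :
    ContinuousLinearMap.adjoint (rcW m d r) (EuclideanSpace.single v 1)
      = if (fun i : Fin d => v (Fin.natAdd m i)) = r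
          then EuclideanSpace.single (fun i : Fin m => v (Fin.castAdd d i)) 1 else 0 := by
  ext u
  rw [adjoint_single_coord, rcW_apply]
  by_cases h : (fun i : Fin d => v (Fin.natAdd m i)) = r
  · rw [if_pos h, if_pos h, one_mul, EuclideanSpace.single_apply, EuclideanSpace.single_apply]
    by_cases h3 : (fun i : Fin m => v (Fin.castAdd d i)) = u
    · rw [if_pos h3, if_pos h3.symm, map_one]
    · rw [if_neg h3, if_neg (fun hc => h3 hc.symm), map_zero]
  · rw [if_neg h, if_neg h, zero_mul, map_zero]
    rfl

lemma adj_lcW_single (k d : ℕ) (r : Wd n d) (v : Wd n (k+d)) :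
    ContinuousLinearMap.adjoint (lcW k d r) (EuclideanSpace.single v 1)
      = if (fun i : Fin d => v (Fin.cast (Nat.add_comm d k) (Fin.castAdd k i))) = r
          then EuclideanSpace.single
            (fun i : Fin k => v (Fin.cast (Nat.add_comm d k) (Fin.natAdd d i))) 1 else 0 := by
  ext u
  rw [adjoint_single_coord, lcW_apply]
  by_cases h : (fun i : Fin d => v (Fin.cast (Nat.add_comm d k) (Fin.castAdd k i))) = r
  · rw [if_pos h, if_pos h, one_mul, EuclideanSpace.single_apply, EuclideanSpace.single_apply]
    by_cases h3 : (fun i : Fin k => v (Fin.cast (Nat.add_comm d k) (Fin.natAdd d i))) = u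
    · rw [if_pos h3, if_pos h3.symm, map_one]
    · rw [if_neg h3, if_neg (fun hc => h3 hc.symm), map_zero]
  · rw [if_neg h, if_neg h, zero_mul, map_zero]
    rfl

lemma dr_eq_iff (m k : ℕ) (w v : Wd n (m+k)) :
    dr m w = dr m v ↔
      (fun i : Fin k => w (Fin.natAdd m i)) = (fun i : Fin k => v (Fin.natAdd m i)) := by
  rw [funext_iff, funext_iff]
  constructor
  · intro h i
    have hi := h (Fin.cast (by omega : k = m+k-m) i)
    have e1 : dr m w (Fin.cast (by omega : k = m+k-m) i) = w (Fin.natAdd m i) :=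
      congrArg w (Fin.ext (by simp))
    have e2 : dr m v (Fin.cast (by omega : k = m+k-m) i) = v (Fin.natAdd m i) :=
      congrArg v (Fin.ext (by simp))
    rw [e1, e2] at hi
    exact hi
  · intro h i
    have hi := h (Fin.cast (by omega : m+k-m = k) i)
    have e1 : w (Fin.natAdd m (Fin.cast (by omega : m+k-m = k) i)) = dr m w i :=
      congrArg w (Fin.ext (by simp))
    have e2 : v (Fin.natAdd m (Fin.cast (by omega : m+k-m = k) i)) = dr m v i :=
      congrArg v (Fin.ext (by simp))
    rw [e1, e2] at hi
    exact hi

lemma MI1 (m k : ℕ) (B : TP n m →L[ℂ] TP n m) :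
    (∑ r : Wd n k, rcW m k r ∘L B ∘L ContinuousLinearMap.adjoint (rcW m k r))
      = opTG (Nat.le_add_right m k) B (ContinuousLinearMap.id ℂ (TP n (m+k-m))) := by
  apply clm_ext_single
  intro v
  ext w
  have hterm : ∀ r : Wd n k,
      (rcW m k r ∘L B ∘L ContinuousLinearMap.adjoint (rcW m k r))
          (EuclideanSpace.single v 1) w
        = (if (fun i : Fin k => v (Fin.natAdd m i)) = r then 1 else 0) *
          ((if (fun i : Fin k => w (Fin.natAdd m i)) = r then 1 else 0) *
            B (EuclideanSpace.single (fun i : Fin m => v (Fin.castAdd k i)) 1)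
              (fun i : Fin m => w (Fin.castAdd k i))) := by
    intro r
    rw [ContinuousLinearMap.comp_apply, ContinuousLinearMap.comp_apply, adj_rcW_single]
    by_cases h : (fun i : Fin k => v (Fin.natAdd m i)) = r
    · rw [if_pos h, if_pos h, one_mul, rcW_apply]
    · rw [if_neg h, if_neg h, zero_mul, map_zero, map_zero]
      rfl
  rw [ContinuousLinearMap.sum_apply]
  have hsum : (∑ r : Wd n k, (rcW m k r ∘L B ∘L ContinuousLinearMap.adjoint (rcW m k r))
        (EuclideanSpace.single v 1)) w
      = ∑ r : Wd n k, (rcW m k r ∘L B ∘L ContinuousLinearMap.adjoint (rcW m k r))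
        (EuclideanSpace.single v 1) w := by
    rw [WithLp.ofLp_sum, Finset.sum_apply]
  rw [hsum, Finset.sum_congr rfl (fun r _ => hterm r)]
  simp only [boole_mul]
  rw [Finset.sum_ite_eq]
  simp only [Finset.mem_univ, if_true]
  rw [opTG, ofMatR_apply]
  simp only [Matrix.of_apply, EuclideanSpace.single_apply, mul_ite, mul_one, mul_zero]
  rw [Finset.sum_ite_eq']
  simp only [Finset.mem_univ, if_true, ent, ContinuousLinearMap.id_apply,
    EuclideanSpace.single_apply]
  rw [show tk (Nat.le_add_right m k) w = (fun i : Fin m => w (Fin.castAdd k i)) from rfl,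
    show tk (Nat.le_add_right m k) v = (fun i : Fin m => v (Fin.castAdd k i)) from rfl]
  by_cases hh : (fun i : Fin k => w (Fin.natAdd m i)) = (fun i : Fin k => v (Fin.natAdd m i))
  · rw [if_pos hh, if_pos ((dr_eq_iff m k w v).mpr hh), mul_one]
  · rw [if_neg hh, if_neg (fun hc => hh ((dr_eq_iff m k w v).mp hc)), mul_zero]

/-- `C ⊗ B` on `H^{⊗(k+m)}` with `C` acting on the first `m` slots. -/
def YOp (m k : ℕ) (C : TP n m →L[ℂ] TP n m) (B : TP n k →L[ℂ] TP n k) :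
    TP n (k+m) →L[ℂ] TP n (k+m) :=
  ofMatR (Matrix.of fun w v =>
    ent C (fun i : Fin m => w (Fin.cast (Nat.add_comm m k) (Fin.castAdd k i)))
          (fun i : Fin m => v (Fin.cast (Nat.add_comm m k) (Fin.castAdd k i))) *
    ent B (fun i : Fin k => w (Fin.cast (Nat.add_comm m k) (Fin.natAdd m i)))
          (fun i : Fin k => v (Fin.cast (Nat.add_comm m k) (Fin.natAdd m i))))

lemma MI2 (m k : ℕ) (C : TP n m →L[ℂ] TP n m) (B : TP n k →L[ℂ] TP n k) :
    (∑ j : Wd n m, ∑ j' : Wd n m,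
        ent C j j' • (lcW k m j ∘L B ∘L ContinuousLinearMap.adjoint (lcW k m j')))
      = YOp m k C B := by
  apply clm_ext_single
  intro v
  ext w
  have hterm : ∀ j j' : Wd n m,
      (ent C j j' • (lcW k m j ∘L B ∘L ContinuousLinearMap.adjoint (lcW k m j')))
          (EuclideanSpace.single v 1) w
        = (if (fun i : Fin m => w (Fin.cast (Nat.add_comm m k) (Fin.castAdd k i))) = j
            then (if (fun i : Fin m => v (Fin.cast (Nat.add_comm m k) (Fin.castAdd k i))) = j'
              then ent C j j' *
                B (EuclideanSpace.single
                    (fun i : Fin k => v (Fin.cast (Nat.add_comm m k) (Fin.natAdd m i))) 1)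
                  (fun i : Fin k => w (Fin.cast (Nat.add_comm m k) (Fin.natAdd m i)))
              else 0) else 0) := by
    intro j j'
    rw [ContinuousLinearMap.smul_apply, ContinuousLinearMap.comp_apply,
      ContinuousLinearMap.comp_apply, adj_lcW_single]
    by_cases h2 : (fun i : Fin m => v (Fin.cast (Nat.add_comm m k) (Fin.castAdd k i))) = j'
    · rw [if_pos h2, PiLp.smul_apply, lcW_apply, smul_eq_mul]
      by_cases h3 : (fun i : Fin m => w (Fin.cast (Nat.add_comm m k) (Fin.castAdd k i))) = j
      · rw [if_pos h3, if_pos h3, if_pos h2, one_mul]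
      · rw [if_neg h3, if_neg h3, zero_mul, mul_zero]
    · rw [if_neg h2, map_zero, map_zero, smul_zero]
      by_cases h3 : (fun i : Fin m => w (Fin.cast (Nat.add_comm m k) (Fin.castAdd k i))) = j
      · rw [if_pos h3, if_neg h2]
        rfl
      · rw [if_neg h3]
        rfl
  rw [ContinuousLinearMap.sum_apply, WithLp.ofLp_sum, Finset.sum_apply]
  have hsum2 : ∀ j : Wd n m, ((∑ j' : Wd n m,
      ent C j j' • (lcW k m j ∘L B ∘L ContinuousLinearMap.adjoint (lcW k m j')))
        (EuclideanSpace.single v 1)) w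
      = ∑ j' : Wd n m, (ent C j j' • (lcW k m j ∘L B ∘L
          ContinuousLinearMap.adjoint (lcW k m j'))) (EuclideanSpace.single v 1) w := by
    intro j
    rw [ContinuousLinearMap.sum_apply, WithLp.ofLp_sum, Finset.sum_apply]
  rw [Finset.sum_congr rfl fun j _ => hsum2 j]
  rw [Finset.sum_congr rfl fun j _ => Finset.sum_congr rfl fun j' _ => hterm j j']
  rw [Finset.sum_comm]
  simp only [Finset.sum_ite_eq, Finset.mem_univ, if_true]
  rw [YOp, ofMatR_apply]
  simp only [Matrix.of_apply, EuclideanSpace.single_apply, mul_ite, mul_one, mul_zero]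
  rw [Finset.sum_ite_eq']
  simp only [Finset.mem_univ, if_true, ent]

lemma tmul_sub {a b : ℕ} (x : TP n a) (y y' : TP n b) :
    tmul x (y - y') = tmul x y - tmul x y' := by
  ext w
  have : (tmul x y - tmul x y') w = tmul x y w - tmul x y' w := rfl
  rw [this, tmul_apply, tmul_apply, tmul_apply]
  have : (y - y') (wsnd w) = y (wsnd w) - y' (wsnd w) := rfl
  rw [this, mul_sub]

lemma YOp_single (m k : ℕ) (C : TP n m →L[ℂ] TP n m) (B : TP n k →L[ℂ] TP n k)
    (v : Wd n (k+m)) :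
    YOp m k C B (EuclideanSpace.single v 1)
      = castTP (Nat.add_comm m k)
          (tmul (C (EuclideanSpace.single
              (fun i : Fin m => v (Fin.cast (Nat.add_comm m k) (Fin.castAdd k i))) 1))
            (B (EuclideanSpace.single
              (fun i : Fin k => v (Fin.cast (Nat.add_comm m k) (Fin.natAdd m i))) 1))) := by
  ext w
  rw [castTP_apply, tmul_apply, YOp, ofMatR_apply]
  simp only [Matrix.of_apply, EuclideanSpace.single_apply, mul_ite, mul_one, mul_zero]
  rw [Finset.sum_ite_eq']
  simp only [Finset.mem_univ, if_true, ent]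
  rfl

lemma prj_sub_perp (H : ∀ m, Submodule ℂ (TP n m)) (a : ℕ) (y : TP n a) :
    ∀ u ∈ H a, ⟪u, prj H a y - y⟫ = 0 := by
  intro u hu
  have h := sub_prj_perp H a y u hu
  have : prj H a y - y = -(y - prj H a y) := (neg_sub _ _).symm
  rw [this, inner_neg_right, h, neg_zero]

lemma prj_YOp (H : ∀ m, Submodule ℂ (TP n m)) (hsp : IsSubproduct H) (m k : ℕ)
    (C : TP n m →L[ℂ] TP n m) :
    (prj H (k+m)) ∘L YOp m k C (prj H k)
      = (prj H (k+m)) ∘L YOp m k C (ContinuousLinearMap.id ℂ (TP n k)) := by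
  apply clm_ext_single
  intro v
  simp only [ContinuousLinearMap.comp_apply, YOp_single, ContinuousLinearMap.id_apply]
  set X := C (EuclideanSpace.single
      (fun i : Fin m => v (Fin.cast (Nat.add_comm m k) (Fin.castAdd k i))) 1)
  set Y := (EuclideanSpace.single
      (fun i : Fin k => v (Fin.cast (Nat.add_comm m k) (Fin.natAdd m i))) (1:ℂ))
  have h0 : prj H (k+m) (castTP (Nat.add_comm m k) (tmul X (prj H k Y))
      - castTP (Nat.add_comm m k) (tmul X Y)) = 0 := by
    apply prj_eq_zero
    intro u hu
    rw [← map_sub, ← tmul_sub, inner_castTP_left]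
    exact inner_tensorSub_right (H m) (H k) X (prj_sub_perp H k Y)
      (hsp.2 m k (mem_castTP H _ hu))
  rw [map_sub] at h0
  exact sub_eq_zero.mp h0

lemma dr_eq_iff' (m k : ℕ) (w v : Wd n (k+m)) :
    dr m w = dr m v ↔
      (fun i : Fin k => w (Fin.cast (Nat.add_comm m k) (Fin.natAdd m i)))
        = (fun i : Fin k => v (Fin.cast (Nat.add_comm m k) (Fin.natAdd m i))) := by
  rw [funext_iff, funext_iff]
  constructor
  · intro h i
    have hi := h (Fin.cast (by omega : k = k+m-m) i)
    have e1 : dr m w (Fin.cast (by omega : k = k+m-m) i)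
        = w (Fin.cast (Nat.add_comm m k) (Fin.natAdd m i)) :=
      congrArg w (Fin.ext (by simp <;> omega))
    have e2 : dr m v (Fin.cast (by omega : k = k+m-m) i)
        = v (Fin.cast (Nat.add_comm m k) (Fin.natAdd m i)) :=
      congrArg v (Fin.ext (by simp <;> omega))
    rw [e1, e2] at hi
    exact hi
  · intro h i
    have hi := h (Fin.cast (by omega : k+m-m = k) i)
    have e1 : w (Fin.cast (Nat.add_comm m k) (Fin.natAdd m (Fin.cast (by omega : k+m-m = k) i)))
        = dr m w i := congrArg w (Fin.ext (by simp <;> omega))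
    have e2 : v (Fin.cast (Nat.add_comm m k) (Fin.natAdd m (Fin.cast (by omega : k+m-m = k) i)))
        = dr m v i := congrArg v (Fin.ext (by simp <;> omega))
    rw [e1, e2] at hi
    exact hi

lemma YOp_one_eq (m k : ℕ) (C : TP n m →L[ℂ] TP n m) :
    YOp m k C (ContinuousLinearMap.id ℂ (TP n k))
      = opTG (Nat.le_add_left m k) C (ContinuousLinearMap.id ℂ (TP n (k+m-m))) := by
  apply clm_ext_single
  intro v
  ext w
  rw [YOp, ofMatR_apply, opTG, ofMatR_apply]
  simp only [Matrix.of_apply, EuclideanSpace.single_apply, mul_ite, mul_one, mul_zero]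
  rw [Finset.sum_ite_eq', Finset.sum_ite_eq']
  simp only [Finset.mem_univ, if_true, ent, ContinuousLinearMap.id_apply,
    EuclideanSpace.single_apply]
  rw [show tk (Nat.le_add_left m k) w
      = (fun i : Fin m => w (Fin.cast (Nat.add_comm m k) (Fin.castAdd k i))) from rfl,
    show tk (Nat.le_add_left m k) v
      = (fun i : Fin m => v (Fin.cast (Nat.add_comm m k) (Fin.castAdd k i))) from rfl]
  by_cases hh : (fun i : Fin k => w (Fin.cast (Nat.add_comm m k) (Fin.natAdd m i)))
      = (fun i : Fin k => v (Fin.cast (Nat.add_comm m k) (Fin.natAdd m i)))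
  · rw [if_pos hh, if_pos ((dr_eq_iff' m k w v).mpr hh)]
  · rw [if_neg hh, if_neg (fun hc => hh ((dr_eq_iff' m k w v).mp hc))]

end Aux

/-- **Statement 5.** `ι_{m,l}(A) = Σ_{|r|=l-m} R_r A R_r^* |_{H_l}
= Σ_{|j|=m=|k|} A_{j,k} S_j S_k^* |_{H_l}`. -/
theorem stmt5 {n : ℕ} (H : ∀ m, Submodule ℂ (TP n m)) (hsp : IsSubproduct H)
    (m k : ℕ) (A : ↥(H m) →L[ℂ] ↥(H m)) :
    iota H (Nat.le_add_right m k) A =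
      cmpOp H (∑ r : Wd n k,
        rshW H m k r ∘L extOp H A ∘L ContinuousLinearMap.adjoint (rshW H m k r)) ∧
    iota H (Nat.le_add_left m k) A =
      cmpOp H (∑ j : Wd n m, ∑ j' : Wd n m, ent (extOp H A) j j' •
        (lshW H k m j ∘L ContinuousLinearMap.adjoint (lshW H k m j'))) := by
  constructor
  · rw [iota]
    refine cmpOp_eq H fun x => ?_
    rw [← MI1 m k (extOp H A)]
    rw [ContinuousLinearMap.sum_apply, ContinuousLinearMap.sum_apply, map_sum, map_sum]
    apply Finset.sum_congr rfl
    intro r _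
    simp only [ContinuousLinearMap.comp_apply]
    rw [adj_rshW_pt H hsp m k r, extOp_prj]
    have hc := DFunLike.congr_fun (prj_rshW H hsp m k r)
      (extOp H A (ContinuousLinearMap.adjoint (rcW m k r) (prj H (m+k) x)))
    simp only [ContinuousLinearMap.comp_apply] at hc
    rw [hc, prj_extOp]
  · rw [iota]
    refine cmpOp_eq H fun x => ?_
    rw [← YOp_one_eq m k (extOp H A)]
    have h1 := DFunLike.congr_fun (prj_YOp H hsp m k (extOp H A)) (prj H (k+m) x)
    simp only [ContinuousLinearMap.comp_apply] at h1
    rw [← h1]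
    rw [← MI2 m k (extOp H A) (prj H k)]
    rw [ContinuousLinearMap.sum_apply, ContinuousLinearMap.sum_apply, map_sum, map_sum]
    apply Finset.sum_congr rfl
    intro j _
    rw [ContinuousLinearMap.sum_apply, ContinuousLinearMap.sum_apply, map_sum, map_sum]
    apply Finset.sum_congr rfl
    intro j' _
    rw [ContinuousLinearMap.smul_apply, ContinuousLinearMap.smul_apply, map_smul, map_smul]
    congr 1
    simp only [ContinuousLinearMap.comp_apply]
    rw [adj_lshW_pt H hsp k m j']
    have hc := DFunLike.congr_fun (prj_lshW H hsp k m j)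
      (prj H k (ContinuousLinearMap.adjoint (lcW k m j') (prj H (k+m) x)))
    simp only [ContinuousLinearMap.comp_apply] at hc
    rw [hc, prj_prj]
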